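/- Let p and q be distinct primes with q ≠ p, and suppose q³ ≤ n. Then a Sylow q-subgroup of the alternating group Alt(n) is non-abelian. -/

import Mathlib

/-- The Heisenberg group of order `q³`. -/
@[ext]
structure Heis (q : ℕ) where
  a : ZMod q
  b : ZMod q
  c : ZMod q
deriving DecidableEq

namespace Heis

variable {q : ℕ}

/-- `Heis q` is equivalent to a triple product. -/
def equivProd : Heis q ≃ ZMod q × ZMod q × ZMod q where
  toFun x := (x.a, x.b, x.c)
  invFun p := ⟨p.1, p.2.1, p.2.2⟩
  left_inv _ := rfl
  right_inv _ := rfl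

instance [NeZero q] : Fintype (Heis q) := Fintype.ofEquiv _ equivProd.symm

instance : Mul (Heis q) :=
  ⟨fun x y => ⟨x.a + y.a, x.b + y.b, x.c + y.c + x.a * y.b⟩⟩

@[simp] lemma mul_a (x y : Heis q) : (x * y).a = x.a + y.a := rfl
@[simp] lemma mul_b (x y : Heis q) : (x * y).b = x.b + y.b := rfl
@[simp] lemma mul_c (x y : Heis q) : (x * y).c = x.c + y.c + x.a * y.b := rfl

instance : One (Heis q) := ⟨⟨0, 0, 0⟩⟩

@[simp] lemma one_a : (1 : Heis q).a = 0 := rfl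
@[simp] lemma one_b : (1 : Heis q).b = 0 := rfl
@[simp] lemma one_c : (1 : Heis q).c = 0 := rfl

instance : Inv (Heis q) := ⟨fun x => ⟨-x.a, -x.b, x.a * x.b - x.c⟩⟩

@[simp] lemma inv_a (x : Heis q) : x⁻¹.a = -x.a := rfl
@[simp] lemma inv_b (x : Heis q) : x⁻¹.b = -x.b := rfl
@[simp] lemma inv_c (x : Heis q) : x⁻¹.c = x.a * x.b - x.c := rfl

instance : Group (Heis q) where
  mul_assoc x y z := by ext <;> simp <;> ring
  one_mul x := by ext <;> simp
  mul_one x := by ext <;> simp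
  inv_mul_cancel x := by ext <;> simp <;> ring

lemma card [NeZero q] : Fintype.card (Heis q) = q ^ 3 := by
  rw [Fintype.card_congr (equivProd (q := q))]
  simp [ZMod.card]
  ring

lemma noncomm (hq : 1 < q) :
    ∃ x y : Heis q, x * y ≠ y * x := by
  haveI : Fact (1 < q) := ⟨hq⟩
  refine ⟨⟨1, 0, 0⟩, ⟨0, 1, 0⟩, fun h => ?_⟩
  have := congrArg Heis.c h
  simp at this

end Heis

/-- The left regular representation as a monoid homomorphism. -/
def regRep (G : Type*) [Group G] : G →* Equiv.Perm G :=
  MonoidHom.mk' Equiv.mulLeft fun a b => Equiv.ext fun x => mul_assoc a b x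

lemma regRep_injective (G : Type*) [Group G] : Function.Injective (regRep G) := by
  intro a b h
  have := congrArg (fun f : Equiv.Perm G => f 1) h
  simpa [regRep] using this

/-- Key auxiliary lemma: if there is a nonabelian group of order `q ^ 3` whose left regular
representation consists of even permutations, and `q ^ 3 ≤ n`, then Sylow `q`-subgroups of
`Alt(n)` are nonabelian. -/
theorem aux_sylow {q n : ℕ} (hq : q.Prime) (G : Type) [Group G] [Fintype G] [DecidableEq G]
    (hcard : Fintype.card G = q ^ 3)
    (hsign : ∀ g : G, Equiv.Perm.sign (Equiv.mulLeft g) = 1)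
    (hnc : ∃ a b : G, a * b ≠ b * a)
    (hn : q ^ 3 ≤ n) (S : Sylow q (alternatingGroup (Fin n))) :
    ¬ IsMulCommutative (S : Subgroup (alternatingGroup (Fin n))) := by
  intro hS
  haveI := Fact.mk hq
  set P : Fin n → Prop := fun x => (x : ℕ) < q ^ 3 with hP
  have e2 : Fin (q ^ 3) ≃ Subtype P :=
    { toFun := fun i => ⟨⟨i, lt_of_lt_of_le i.2 hn⟩, i.2⟩
      invFun := fun x => ⟨(x.1 : ℕ), x.2⟩
      left_inv := fun i => rfl
      right_inv := fun x => rfl }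
  let f : G ≃ Subtype P := (Fintype.equivFinOfCardEq hcard).trans e2
  let ψ : G →* Equiv.Perm (Fin n) := (Equiv.Perm.extendDomainHom f).comp (regRep G)
  have hψinj : Function.Injective ψ :=
    (Equiv.Perm.extendDomainHom_injective f).comp (regRep_injective G)
  have hmem : ∀ g : G, ψ g ∈ alternatingGroup (Fin n) := by
    intro g
    rw [Equiv.Perm.mem_alternatingGroup]
    show Equiv.Perm.sign ((regRep G g).extendDomain f) = 1
    rw [Equiv.Perm.sign_extendDomain]
    exact hsign g
  let φ : G →* alternatingGroup (Fin n) := ψ.codRestrict _ hmem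
  have hφinj : Function.Injective φ := fun a b h => hψinj (congrArg Subtype.val h)
  have htop : IsPGroup q (⊤ : Subgroup G) :=
    IsPGroup.of_card (by
      rw [Nat.card_congr Subgroup.topEquiv.toEquiv, Nat.card_eq_fintype_card, hcard])
  have hPH : IsPGroup q (Subgroup.map φ ⊤) := htop.map φ
  obtain ⟨Q, hQ⟩ := hPH.exists_le_sylow
  obtain ⟨g, hg⟩ := MulAction.exists_smul_eq (alternatingGroup (Fin n)) S Q
  haveI hS' := hS
  haveI hQcomm : IsMulCommutative (Q : Subgroup (alternatingGroup (Fin n))) := by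
    rw [← hg, Sylow.coe_subgroup_smul, Subgroup.pointwise_smul_def]
    exact Subgroup.map_isMulCommutative _ _
  obtain ⟨a, b, hab⟩ := hnc
  have ha : φ a ∈ (Q : Subgroup (alternatingGroup (Fin n))) :=
    hQ (Subgroup.mem_map_of_mem φ (Subgroup.mem_top a))
  have hb : φ b ∈ (Q : Subgroup (alternatingGroup (Fin n))) :=
    hQ (Subgroup.mem_map_of_mem φ (Subgroup.mem_top b))
  have hcomm := Subgroup.mul_comm_of_mem_isMulCommutative
    (Q : Subgroup (alternatingGroup (Fin n))) ha hb
  apply hab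
  apply hφinj
  rw [map_mul, map_mul, hcomm]

/-- If `p` and `q` are distinct primes and `q³ ≤ n`, then a Sylow `q`-subgroup of the
alternating group on `n` letters is non-abelian. -/
theorem stmt_5 (p q n : ℕ) (hp : p.Prime) (hq : q.Prime) (hpq : q ≠ p)
    (hn : q ^ 3 ≤ n) (S : Sylow q (alternatingGroup (Fin n))) :
    ¬ IsMulCommutative (S : Subgroup (alternatingGroup (Fin n))) := by
  by_cases h2 : q = 2
  · subst h2
    refine aux_sylow hq (DihedralGroup 4) ?_ ?_ ?_ hn S
    · rw [DihedralGroup.card]; norm_num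
    · decide
    · exact ⟨DihedralGroup.r 1, DihedralGroup.sr 0, by decide⟩
  · haveI : NeZero q := ⟨hq.ne_zero⟩
    refine aux_sylow hq (Heis q) Heis.card ?_ (Heis.noncomm hq.one_lt) hn S
    intro g
    have hodd : Odd (q ^ 3) := (hq.odd_of_ne_two h2).pow
    have hgpow : g ^ (q ^ 3) = 1 := by
      rw [← Heis.card (q := q)]
      exact pow_card_eq_one
    have h1 : Equiv.Perm.sign (Equiv.mulLeft g) ^ (q ^ 3) = 1 := by
      rw [← map_pow]
      have : Equiv.mulLeft g ^ (q ^ 3) = regRep (Heis q) (g ^ (q ^ 3)) :=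
        (map_pow (regRep (Heis q)) g _).symm
      rw [this, hgpow, map_one, map_one]
    rcases Int.units_eq_one_or (Equiv.Perm.sign (Equiv.mulLeft g)) with h | h
    · exact h
    · rw [h, hodd.neg_one_pow] at h1
      exact absurd h1 (by decide)
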